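/- Let F = [L; R] with L ∈ R^{n₁×r}, R ∈ R^{n₂×r}, and let F_star = [L_star; R_star] with L_star = U_star·Σ_star^{1/2}, R_star = V_star·Σ_star^{1/2} coming from a compact SVD X_star = U_star·Σ_star·V_star^T of a rank-r matrix. Suppose Q ∈ GL(r) minimizes the function Q ↦ ‖(L·Q − L_star)·Σ_star^{1/2}‖_F² + ‖(R·Q^{-T} − R_star)·Σ_star^{1/2}‖_F² over invertible r×r matrices. Then Q satisfies the first-order optimality condition (L·Q)^T·(L·Q − L_star)·Σ_star = Σ_star·(R·Q^{-T} − R_star)^T·(R·Q^{-T}). -/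

import Mathlib

open Matrix

/-- Frobenius norm of a real matrix. -/
noncomputable def frob {n₁ n₂ : ℕ} (A : Matrix (Fin n₁) (Fin n₂) ℝ) : ℝ :=
  Real.sqrt (∑ i, ∑ j, (A i j) ^ 2)

noncomputable def f2 {n₁ n₂ : ℕ} (A : Matrix (Fin n₁) (Fin n₂) ℝ) : ℝ := ∑ i, ∑ j, (A i j)^2
noncomputable def ip {n₁ n₂ : ℕ} (A B : Matrix (Fin n₁) (Fin n₂) ℝ) : ℝ := ∑ i, ∑ j, A i j * B i j

lemma frob_sq {n₁ n₂ : ℕ} (A : Matrix (Fin n₁) (Fin n₂) ℝ) : frob A ^ 2 = f2 A := by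
  rw [frob, Real.sq_sqrt] <;> first | rfl | positivity

lemma f2_add_smul {m n : ℕ} (X Y : Matrix (Fin m) (Fin n) ℝ) (t : ℝ) :
    f2 (X + t • Y) = f2 X + 2*t* ip X Y + t^2 * f2 Y := by
  simp only [f2, ip, Matrix.add_apply, Matrix.smul_apply, smul_eq_mul, Finset.mul_sum,
    ← Finset.sum_add_distrib]
  exact Finset.sum_congr rfl fun i _ => Finset.sum_congr rfl fun j _ => by ring

lemma key (b c2 c3 c4 : ℝ)
    (h : ∀ t : ℝ, |t| < 1/2 → 0 ≤ b*t + c2*t^2 + c3*t^3 + c4*t^4) : b = 0 := by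
  set f : ℝ → ℝ := fun t => b*t + c2*t^2 + c3*t^3 + c4*t^4 with hf
  have hmin : IsLocalMin f 0 := by
    rw [IsLocalMin, IsMinFilter, Metric.eventually_nhds_iff]
    exact ⟨1/2, by norm_num, fun y hy => by
      simpa [hf] using h y (by simpa [Real.dist_eq] using hy)⟩
  have hd : HasDerivAt f b 0 := by
    have h1 : HasDerivAt (fun t:ℝ => b*t) b 0 := by
      simpa using (hasDerivAt_id (0:ℝ)).const_mul b
    have h2 : HasDerivAt (fun t:ℝ => c2*t^2) 0 0 := by
      simpa using (hasDerivAt_pow 2 (0:ℝ)).const_mul c2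
    have h3 : HasDerivAt (fun t:ℝ => c3*t^3) 0 0 := by
      simpa using (hasDerivAt_pow 3 (0:ℝ)).const_mul c3
    have h4 : HasDerivAt (fun t:ℝ => c4*t^4) 0 0 := by
      simpa using (hasDerivAt_pow 4 (0:ℝ)).const_mul c4
    have h5 := ((h1.add h2).add h3).add h4
    rw [add_zero, add_zero, add_zero] at h5
    exact h5
  have := hmin.deriv_eq_zero
  rwa [hd.deriv] at this

/-- First-order optimality condition for the optimal alignment matrix: if the invertible
matrix `Q` minimizes `‖(LQ − L_star)Σ_star^{1/2}‖_F² + ‖(RQ^{-T} − R_star)Σ_star^{1/2}‖_F²`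
over invertible matrices, then
`(LQ)ᵀ (LQ − L_star) Σ_star = Σ_star (RQ^{-T} − R_star)ᵀ (RQ^{-T})`. -/
theorem optimal_alignment_first_order {n₁ n₂ r : ℕ}
    (Ustar : Matrix (Fin n₁) (Fin r) ℝ) (Vstar : Matrix (Fin n₂) (Fin r) ℝ)
    (σ : Fin r → ℝ) (hU : Ustarᵀ * Ustar = 1) (hV : Vstarᵀ * Vstar = 1)
    (hσ : ∀ i, 0 < σ i)
    (Lstar : Matrix (Fin n₁) (Fin r) ℝ) (Rstar : Matrix (Fin n₂) (Fin r) ℝ)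
    (hLstar : Lstar = Ustar * Matrix.diagonal (fun i => Real.sqrt (σ i)))
    (hRstar : Rstar = Vstar * Matrix.diagonal (fun i => Real.sqrt (σ i)))
    (L : Matrix (Fin n₁) (Fin r) ℝ) (R : Matrix (Fin n₂) (Fin r) ℝ)
    (Q : Matrix (Fin r) (Fin r) ℝ) (hQ : IsUnit Q)
    (hmin : ∀ Q' : Matrix (Fin r) (Fin r) ℝ, IsUnit Q' →
      (frob ((L * Q - Lstar) * Matrix.diagonal (fun i => Real.sqrt (σ i)))) ^ 2 +
        (frob ((R * (Q⁻¹)ᵀ - Rstar) * Matrix.diagonal (fun i => Real.sqrt (σ i)))) ^ 2 ≤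
      (frob ((L * Q' - Lstar) * Matrix.diagonal (fun i => Real.sqrt (σ i)))) ^ 2 +
        (frob ((R * (Q'⁻¹)ᵀ - Rstar) * Matrix.diagonal (fun i => Real.sqrt (σ i)))) ^ 2) :
    (L * Q)ᵀ * (L * Q - Lstar) * Matrix.diagonal σ =
      Matrix.diagonal σ * (R * (Q⁻¹)ᵀ - Rstar)ᵀ * (R * (Q⁻¹)ᵀ) := by
  set S := Matrix.diagonal (fun i => Real.sqrt (σ i)) with hS
  set N := L * Q with hN
  set M := L * Q - Lstar with hM
  set W := R * (Q⁻¹)ᵀ with hW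
  set P := R * (Q⁻¹)ᵀ - Rstar with hP
  have hdet : IsUnit Q.det := (Matrix.isUnit_iff_isUnit_det Q).mp hQ
  -- the first-order condition in each coordinate direction
  have key_eq : ∀ k l : Fin r,
      ip (M*S) (N * single k l (1:ℝ) * S)
        = ip (P*S) (W * (single k l (1:ℝ))ᵀ * S) := by
    intro k l
    set E := single k l (1:ℝ) with hE
    set δ : ℝ := if l = k then 1 else 0 with hδ
    have hEE : E * E = δ • E := by
      rw [hE, hδ]
      rcases eq_or_ne l k with h|h
      · subst h; simp [Matrix.single_mul_single_same]
      · simp [h, Matrix.single_mul_single_of_ne]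
    set a₁ := ip (M*S) (N * E * S) with ha₁
    set a₂ := f2 (N * E * S) with ha₂
    set a₃ := ip (P*S) (W * Eᵀ * S) with ha₃
    set a₄ := f2 (W * Eᵀ * S) with ha₄
    have hb : 2*a₁ - 2*a₃ = 0 := by
      apply key (2*a₁ - 2*a₃) (a₂ + 4*δ*a₁ - 2*δ*a₃ + a₄) (2*δ*a₂ + 2*δ^2*a₁) (δ^2*a₂)
      intro t ht
      have hδ01 : δ = 0 ∨ δ = 1 := by rw [hδ]; split <;> simp
      have hpos : 0 < 1 + δ*t := by
        rcases hδ01 with h | h <;> rw [h]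
        · norm_num
        · rw [one_mul]; rcases abs_lt.mp ht with ⟨h1, h2⟩; linarith
      set c : ℝ := t / (1 + δ*t) with hc
      have hcid : t - c - t*c*δ = 0 := by
        have hct : c*(1+δ*t) = t := by rw [hc]; exact div_mul_cancel₀ t hpos.ne'
        linear_combination (-1:ℝ) * hct
      have hcid' : t - c - c*t*δ = 0 := by
        rw [mul_comm c t]; exact hcid
      have h1 : (1 + t•E) * (1 - c•E) = 1 := by
        have hex : (1 + t•E) * (1 - c•E) = 1 + (t - c - t*c*δ)•E := by
          simp only [add_mul, mul_sub, one_mul, mul_one, smul_mul_assoc, mul_smul_comm, hEE,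
            smul_smul]
          module
        rw [hex, hcid, zero_smul, add_zero]
      have h2 : (1 - c•E) * (1 + t•E) = 1 := by
        have hex : (1 - c•E) * (1 + t•E) = 1 + (t - c - c*t*δ)•E := by
          simp only [sub_mul, mul_add, one_mul, mul_one, smul_mul_assoc, mul_smul_comm, hEE,
            smul_smul]
          module
        rw [hex, hcid', zero_smul, add_zero]
      have hQ' : IsUnit (Q * (1 + t•E)) := hQ.mul ⟨⟨1 + t•E, 1 - c•E, h1, h2⟩, rfl⟩
      have hQ'inv : (Q * (1 + t•E))⁻¹ = (1 - c•E) * Q⁻¹ := by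
        apply Matrix.inv_eq_right_inv
        rw [Matrix.mul_assoc, ← Matrix.mul_assoc (1 + t•E), h1, Matrix.one_mul,
          Matrix.mul_nonsing_inv Q hdet]
      have hL' : (L * (Q * (1 + t•E)) - Lstar) * S = M*S + t•(N*E*S) := by
        rw [← Matrix.mul_assoc, Matrix.mul_add, Matrix.mul_one, Matrix.mul_smul]
        rw [← hN]
        rw [show N + t•(N*E) - Lstar = M + t•(N*E) by rw [hM, hN]; abel]
        rw [Matrix.add_mul, Matrix.smul_mul, Matrix.mul_assoc]
      have hR' : (R * ((Q * (1 + t•E))⁻¹)ᵀ - Rstar) * S = P*S + (-c)•(W*Eᵀ*S) := by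
        rw [hQ'inv, Matrix.transpose_mul, ← Matrix.mul_assoc, Matrix.transpose_sub,
          Matrix.transpose_one, Matrix.transpose_smul, Matrix.mul_sub, Matrix.mul_one,
          Matrix.mul_smul]
        rw [← hW]
        rw [show W - c•(W*Eᵀ) - Rstar = P + (-c)•(W*Eᵀ) by rw [hP, hW, neg_smul]; abel]
        rw [Matrix.add_mul, Matrix.smul_mul, Matrix.mul_assoc]
      have hineq := hmin (Q * (1 + t•E)) hQ'
      rw [hL', hR', frob_sq, frob_sq, frob_sq, frob_sq, f2_add_smul, f2_add_smul] at hineq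
      have hg : 0 ≤ 2*t*a₁ + t^2*a₂ + 2*(-c)*a₃ + (-c)^2*a₄ := by
        rw [ha₁, ha₂, ha₃, ha₄]; linarith [hineq]
      have hid : (2*a₁ - 2*a₃)*t + (a₂ + 4*δ*a₁ - 2*δ*a₃ + a₄)*t^2
            + (2*δ*a₂ + 2*δ^2*a₁)*t^3 + (δ^2*a₂)*t^4
          = (2*t*a₁ + t^2*a₂ + 2*(-c)*a₃ + (-c)^2*a₄) * (1 + δ*t)^2 := by
        have hct : c*(1+δ*t) = t := by rw [hc]; exact div_mul_cancel₀ t hpos.ne'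
        linear_combination (2*a₃*(1+δ*t) - a₄*(c*(1+δ*t)+t)) * hct
      rw [hid]
      exact mul_nonneg hg (sq_nonneg _)
    linarith [hb]
  -- compute both inner products entrywise
  have hcomp : ∀ k l : Fin r,
      σ l * (∑ i, N i k * M i l) = σ k * (∑ i, P i k * W i l) := by
    intro k l
    have hNE : ∀ i j, (N * single k l (1:ℝ)) i j = if j = l then N i k else 0 := by
      intro i j
      simp [Matrix.mul_apply, Matrix.single, ite_and, Finset.sum_ite_eq, eq_comm]
    have hWE : ∀ i j, (W * (single k l (1:ℝ))ᵀ) i j = if j = k then W i l else 0 := by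
      intro i j
      simp [Matrix.mul_apply, Matrix.single, ite_and, Finset.sum_ite_eq, eq_comm]
    have h := key_eq k l
    have e1 : ip (M*S) (N * single k l (1:ℝ) * S) = σ l * (∑ i, N i k * M i l) := by
      rw [ip, Finset.mul_sum]
      apply Finset.sum_congr rfl; intro i _
      rw [Finset.sum_eq_single l]
      · rw [hS, Matrix.mul_diagonal, Matrix.mul_diagonal, hNE, if_pos rfl]
        linear_combination (M i l * N i k) * Real.mul_self_sqrt (hσ l).le
      · intro j _ hj
        rw [hS, Matrix.mul_diagonal, Matrix.mul_diagonal, hNE, if_neg hj]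
        ring
      · intro hl; exact absurd (Finset.mem_univ l) hl
    have e2 : ip (P*S) (W * (single k l (1:ℝ))ᵀ * S) = σ k * (∑ i, P i k * W i l) := by
      rw [ip, Finset.mul_sum]
      apply Finset.sum_congr rfl; intro i _
      rw [Finset.sum_eq_single k]
      · rw [hS, Matrix.mul_diagonal, Matrix.mul_diagonal, hWE, if_pos rfl]
        linear_combination (P i k * W i l) * Real.mul_self_sqrt (hσ k).le
      · intro j _ hj
        rw [hS, Matrix.mul_diagonal, Matrix.mul_diagonal, hWE, if_neg hj]
        ring
      · intro hl; exact absurd (Finset.mem_univ k) hl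
    rw [← e1, ← e2]; exact h
  ext k l
  have hl : (Nᵀ * M * Matrix.diagonal σ) k l = σ l * (∑ i, N i k * M i l) := by
    rw [Matrix.mul_diagonal, Matrix.mul_apply, Finset.sum_mul, Finset.mul_sum]
    exact Finset.sum_congr rfl fun i _ => by rw [Matrix.transpose_apply]; ring
  have hr : (Matrix.diagonal σ * Pᵀ * W) k l = σ k * (∑ i, P i k * W i l) := by
    rw [Matrix.mul_apply, Finset.mul_sum]
    refine Finset.sum_congr rfl fun i _ => ?_
    rw [Matrix.diagonal_mul, Matrix.transpose_apply]; ring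
  rw [hl, hr]
  exact hcomp k l
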